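/- Given the parent-distance encoding PD_T of a string T over a linearly ordered alphabet, the parent-distance encoding of any substring satisfies: PD_{T[i..j]}[k] = PD_T[i+k−1] if PD_T[i+k−1] < k, and 0 otherwise, for all 1 ≤ k ≤ j−i+1. -/

import Mathlib

/-- `sub S i j` is the substring `S[i..j]` (1-indexed, inclusive). -/
def sub {α : Type*} (S : List α) (i j : ℕ) : List α :=
  (S.drop (i - 1)).take (j - i + 1)

/-- parent-distance value at (0-indexed) position `p`. -/
def pdAt {α : Type*} [LinearOrder α] [Inhabited α] (T : List α) (p : ℕ) : ℕ :=
  match ((List.range p).filter (fun q => T.getD q default ≤ T.getD p default)).max? with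
  | some q => p - q
  | none => 0

/-- the parent-distance encoding `PD_T` of `T`. -/
def pd {α : Type*} [LinearOrder α] [Inhabited α] (T : List α) : List ℕ :=
  (List.range T.length).map (pdAt T)

private lemma max?_char (l : List ℕ) (m : ℕ) : l.max? = some m ↔ m ∈ l ∧ ∀ b ∈ l, b ≤ m :=
  List.max?_eq_some_iff

private lemma getD_pd {α : Type*} [LinearOrder α] [Inhabited α] (T : List α) (p : ℕ)
    (hp : p < T.length) : (pd T).getD p 0 = pdAt T p := by
  have hlen : p < (pd T).length := by simp [pd, hp]
  rw [List.getD_eq_getElem (pd T) 0 hlen]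
  simp [pd]

/-- `PD_{T[i..j]}[k] = PD_T[i+k-1]` if `PD_T[i+k-1] < k`, else `0`
(all positions 1-indexed). -/
theorem stmt18 {α : Type*} [LinearOrder α] [Inhabited α] (T : List α) (i j : ℕ)
    (h1 : 1 ≤ i) (hij : i ≤ j) (hj : j ≤ T.length)
    (k : ℕ) (hk1 : 1 ≤ k) (hk : k ≤ j - i + 1) :
    (pd (sub T i j)).getD (k - 1) 0 =
      if (pd T).getD (i + k - 2) 0 < k then (pd T).getD (i + k - 2) 0 else 0 := by
  set S := sub T i j with hSdef
  have hSlen : S.length = j - i + 1 := by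
    simp only [hSdef, sub, List.length_take, List.length_drop]
    omega
  set p := i + k - 2 with hp
  have hpk : i - 1 + (k - 1) = p := by omega
  have hpT : p < T.length := by omega
  -- getD of S in terms of T
  have hget : ∀ q, q < j - i + 1 → S.getD q default = T.getD (i - 1 + q) default := by
    intro q hq
    have hq' : q < S.length := by omega
    have hq'' : i - 1 + q < T.length := by omega
    rw [List.getD_eq_getElem _ _ hq', List.getD_eq_getElem _ _ hq'']
    simp only [hSdef, sub]
    rw [List.getElem_take, List.getElem_drop]
  have hk1' : k - 1 < j - i + 1 := by omega
  -- rewrite LHS and RHS via pdAt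
  rw [getD_pd S (k - 1) (by omega), getD_pd T p hpT]
  set A := (List.range (k - 1)).filter
      (fun q => S.getD q default ≤ S.getD (k - 1) default) with hA
  set B := (List.range p).filter
      (fun q => T.getD q default ≤ T.getD p default) with hB
  have hmemA : ∀ q, q ∈ A ↔ q < k - 1 ∧ T.getD (i - 1 + q) default ≤ T.getD p default := by
    intro q
    simp only [hA, List.mem_filter, List.mem_range, decide_eq_true_eq]
    constructor
    · rintro ⟨h1', h2'⟩
      rw [hget q (by omega), hget (k - 1) hk1', hpk] at h2'
      exact ⟨h1', h2'⟩
    · rintro ⟨h1', h2'⟩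
      refine ⟨h1', ?_⟩
      rw [hget q (by omega), hget (k - 1) hk1', hpk]
      exact h2'
  have hmemB : ∀ b, b ∈ B ↔ b < p ∧ T.getD b default ≤ T.getD p default := by
    intro b; simp [hB, List.mem_filter, List.mem_range]
  have hAB : ∀ q, q ∈ A → i - 1 + q ∈ B := by
    intro q hq
    rw [hmemA] at hq
    rw [hmemB]
    exact ⟨by omega, hq.2⟩
  rcases hM : B.max? with _ | m
  · -- B empty, so A empty
    have hBnil : B = [] := List.max?_eq_none_iff.mp hM
    have hAnil : A = [] := by
      rcases List.eq_nil_or_concat A with h | ⟨l, a, h⟩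
      · exact h
      · exfalso
        have : a ∈ A := by rw [h]; simp
        have := hAB a this
        rw [hBnil] at this; simp at this
    unfold pdAt
    rw [← hA, ← hB, hAnil, hM]
    simp [hk1]
  · have hm := (max?_char B m).mp hM
    have hmB := (hmemB m).mp hm.1
    by_cases hcase : i - 1 ≤ m
    · -- A.max? = some (m - (i-1))
      have hAmax : A.max? = some (m - (i - 1)) := by
        rw [max?_char]
        constructor
        · rw [hmemA]
          constructor
          · omega
          · have : i - 1 + (m - (i - 1)) = m := by omega
            rw [this]; exact hmB.2
        · intro b hb
          have := hm.2 _ (hAB b hb)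
          omega
      unfold pdAt
      rw [← hA, ← hB, hAmax, hM]
      have h1 : p - m < k := by omega
      rw [if_pos h1]
      show k - 1 - (m - (i - 1)) = p - m
      omega
    · -- A empty
      have hAnil : A = [] := by
        rcases List.eq_nil_or_concat A with h | ⟨l, a, h⟩
        · exact h
        · exfalso
          have ha : a ∈ A := by rw [h]; simp
          have := hm.2 _ (hAB a ha)
          omega
      unfold pdAt
      rw [← hA, ← hB, hAnil, hM]
      have : ¬ (p - m < k) := by omega
      rw [if_neg this]
      simp
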